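/- Let M be the explicit 11×11 rational matrix representing the action of the lift of the birational map Φ on the Néron–Severi group of the twice-blown-up plane. Then M has a Jordan block of size at least 3 for the eigenvalue 1; precisely, there exists a vector v ∈ ℚ^11 such that (M − I)^3 v = 0 and (M − I)^2 v ≠ 0. -/
import Mathlib


namespace Stmt13

def M : Matrix (Fin 11) (Fin 11) ℚ :=
  !![5, 4, 0, 0, 0, 0, 0, 1, 1, 1, 1;
    0, 0, 0, 0, 0, 0, 1, 0, 0, 0, 0;
    -1, -1, 1, 0, 0, 0, 0, -1, 0, 0, 0;
    -1, -1, 0, 1, 0, 0, 0, 0, -1, 0, 0;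
    -1, -1, 0, 0, 1, 0, 0, 0, 0, -1, 0;
    -1, -1, 0, 0, 0, 1, 0, 0, 0, 0, -1;
    -4, -3, 0, 0, 0, 0, 0, -1, -1, -1, -1;
    -2, -2, 0, 0, 0, 0, 0, -1, 0, 0, 0;
    -2, -2, 0, 0, 0, 0, 0, 0, -1, 0, 0;
    -2, -2, 0, 0, 0, 0, 0, 0, 0, -1, 0;
    -2, -2, 0, 0, 0, 0, 0, 0, 0, 0, -1]

/-- The matrix `M` representing the action of the regularized lift of `Φ` on the Néron–Severi
group of the twice-blown-up plane has a Jordan block of size at least `3` for the eigenvalue `1`: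
there is a vector `v` with `(M - I)³ v = 0` but `(M - I)² v ≠ 0`. -/
theorem jordan_block_of_size_three :
    ∃ v : Fin 11 → ℚ,
      ((M - 1) ^ 3).mulVec v = 0 ∧ ((M - 1) ^ 2).mulVec v ≠ 0 := by
  have key : ∀ v w : Fin 11 → ℚ, M.mulVec v - v = w → (M - 1).mulVec v = w := by
    intro v w h
    rw [Matrix.sub_mulVec, Matrix.one_mulVec, h]
  have h1 : (M - 1).mulVec ![1,0,0,0,0,0,0,0,0,0,0] =
      ![4,0,-1,-1,-1,-1,-4,-2,-2,-2,-2] := by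
    apply key
    rw [funext_iff]
    simp only [Fin.forall_fin_succ, Fin.forall_fin_zero_pi, M, Matrix.mulVec, dotProduct,
      Fin.sum_univ_succ, Finset.univ_eq_empty, Finset.sum_empty, Matrix.cons_val_zero,
      Matrix.cons_val_succ, Pi.sub_apply, Matrix.of_apply]
    norm_num
  have h2 : (M - 1).mulVec ![4,0,-1,-1,-1,-1,-4,-2,-2,-2,-2] =
      ![8,-4,-2,-2,-2,-2,-4,-4,-4,-4,-4] := by
    apply key
    rw [funext_iff]
    simp only [Fin.forall_fin_succ, Fin.forall_fin_zero_pi, M, Matrix.mulVec, dotProduct,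
      Fin.sum_univ_succ, Finset.univ_eq_empty, Finset.sum_empty, Matrix.cons_val_zero,
      Matrix.cons_val_succ, Pi.sub_apply, Matrix.of_apply]
    norm_num
  have h3 : (M - 1).mulVec ![8,-4,-2,-2,-2,-2,-4,-4,-4,-4,-4] = 0 := by
    apply key
    rw [funext_iff]
    simp only [Fin.forall_fin_succ, Fin.forall_fin_zero_pi, M, Matrix.mulVec, dotProduct,
      Fin.sum_univ_succ, Finset.univ_eq_empty, Finset.sum_empty, Matrix.cons_val_zero,
      Matrix.cons_val_succ, Pi.sub_apply, Matrix.of_apply]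
    norm_num
  have hp3 : (M - 1) ^ 3 = (M - 1) * ((M - 1) * (M - 1)) := by
    rw [pow_succ, pow_two, mul_assoc]
  have hp2 : (M - 1) ^ 2 = (M - 1) * (M - 1) := sq (M - 1)
  refine ⟨![1,0,0,0,0,0,0,0,0,0,0], ?_, ?_⟩
  · rw [hp3, ← Matrix.mulVec_mulVec, ← Matrix.mulVec_mulVec, h1, h2, h3]
  · rw [hp2, ← Matrix.mulVec_mulVec, h1, h2]
    intro h
    have h0 := congrFun h 0
    simp at h0

end Stmt13
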